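/- Let N ≥ 1, T ≥ 1, and H ≥ 1 be natural numbers, let h : Fin N → ℝ be a synthesis window, and for a spectrogram S : Fin T → Fin N → ℂ define the overlap-add ISTFT signal x_S : ℤ → ℂ by x_S(n) = Σ_{t < T} [if 0 ≤ n − tH < N then h(n − tH) · Σ_{k < N} S(t,k) · exp(2πi·k·(n − tH)/N) else 0]. Then for any two spectrograms S₁, S₂ : Fin T → Fin N → ℂ, (Σ_{n ∈ ℤ} |x_{S₁}(n) − x_{S₂}(n)|²)^{1/2} ≤ (max_{m < N} |h(m)|) · √(N·T) · (Σ_{t < T} Σ_{k < N} |S₁(t,k) − S₂(t,k)|²)^{1/2}. In particular, the ISTFT operator is Lipschitz continuous with constant L_ISTFT ≤ ‖h‖_∞ · √(N·T). -/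

import Mathlib

open Complex Real

/-- Overlap-add ISTFT: given a spectrogram `S : Fin T → Fin N → ℂ` (T frames, N bins)
with hop size `H` and synthesis window `h : Fin N → ℝ`, the reconstructed signal at
time `n ∈ ℤ` is the sum over frames of the windowed, shifted unnormalized inverse DFT:
`x_S(n) = Σ_{t<T} [if 0 ≤ n − tH < N then h(n−tH) · Σ_{k<N} S(t,k)·exp(2πi·k·(n−tH)/N) else 0]`. -/
noncomputable def olaISTFT (N T H : ℕ) (h : Fin N → ℝ)
    (S : Fin T → Fin N → ℂ) (n : ℤ) : ℂ :=
  ∑ t : Fin T,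
    if hc : 0 ≤ n - (t : ℤ) * H ∧ n - (t : ℤ) * H < N then
      (h ⟨(n - (t : ℤ) * H).toNat, by omega⟩ : ℂ) *
        ∑ k : Fin N, S t k *
          Complex.exp (2 * Real.pi * Complex.I * (k : ℕ) * ((n - (t : ℤ) * H) : ℤ) / N)
    else 0


lemma exp_orth (N : ℕ) (hN : 1 ≤ N) (k k' : Fin N) :
    ∑ m ∈ Finset.range N,
        Complex.exp (2 * Real.pi * Complex.I * (((k:ℕ):ℂ) - ((k':ℕ):ℂ)) * (m:ℂ) / N)
      = if k = k' then (N:ℂ) else 0 := by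
  have hN0 : (N:ℂ) ≠ 0 := Nat.cast_ne_zero.mpr (by omega)
  rcases eq_or_ne k k' with rfl | hkk
  · simp
  · rw [if_neg hkk]
    set ζ := Complex.exp (2 * Real.pi * Complex.I * (((k:ℕ):ℂ) - ((k':ℕ):ℂ)) / N) with hζ
    have hpow : ∀ m : ℕ, Complex.exp (2 * Real.pi * Complex.I * (((k:ℕ):ℂ) - ((k':ℕ):ℂ)) * (m:ℂ) / N) = ζ ^ m := by
      intro m
      rw [hζ, ← Complex.exp_nat_mul]
      congr 1
      field_simp
    have hζN : ζ ^ N = 1 := by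
      rw [hζ, ← Complex.exp_nat_mul]
      have h1 : (N:ℂ) * (2 * Real.pi * Complex.I * (((k:ℕ):ℂ) - ((k':ℕ):ℂ)) / N)
          = (((k:ℤ) - (k':ℤ) : ℤ) : ℂ) * (2 * Real.pi * Complex.I) := by
        push_cast
        field_simp
      rw [h1, Complex.exp_int_mul_two_pi_mul_I]
    have hζ1 : ζ ≠ 1 := by
      intro hone
      rw [hζ, Complex.exp_eq_one_iff] at hone
      obtain ⟨n, hn⟩ := hone
      have hpi : (2 * Real.pi * Complex.I : ℂ) ≠ 0 := by
        simp [Complex.ext_iff, Real.pi_ne_zero, Complex.I_ne_zero]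
      have h2 : (((k:ℕ):ℂ) - ((k':ℕ):ℂ)) = (n:ℂ) * N := by
        field_simp at hn
        apply mul_left_cancel₀ hpi
        linear_combination (2 * Real.pi * Complex.I) * hn
      have h3 : (k:ℤ) - (k':ℤ) = n * N := by
        have : (((k:ℤ) - (k':ℤ) : ℤ) : ℂ) = ((n * N : ℤ) : ℂ) := by push_cast; linear_combination h2
        exact_mod_cast this
      have hkZ : (k:ℤ) < N := by exact_mod_cast k.isLt
      have hk'Z : (k':ℤ) < N := by exact_mod_cast k'.isLt
      have hk0 : (0:ℤ) ≤ (k:ℤ) := Int.natCast_nonneg _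
      have hk'0 : (0:ℤ) ≤ (k':ℤ) := Int.natCast_nonneg _
      have hNZ : (1:ℤ) ≤ N := by exact_mod_cast hN
      have hne : (k:ℤ) ≠ (k':ℤ) := by
        simpa [Fin.ext_iff] using hkk
      rcases lt_trichotomy n 0 with hlt | rfl | hgt
      · have hb : n * N ≤ -N := by nlinarith
        linarith
      · simp at h3; omega
      · have hb : (N:ℤ) ≤ n * N := by nlinarith
        linarith
    calc ∑ m ∈ Finset.range N, Complex.exp (2 * Real.pi * Complex.I * (((k:ℕ):ℂ) - ((k':ℕ):ℂ)) * (m:ℂ) / N)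
        = ∑ m ∈ Finset.range N, ζ ^ m :=
          Finset.sum_congr rfl fun m _ => hpow m
      _ = (ζ ^ N - 1) / (ζ - 1) := geom_sum_eq hζ1 N
      _ = 0 := by rw [hζN]; simp

lemma parseval (N : ℕ) (hN : 1 ≤ N) (c : Fin N → ℂ) :
    ∑ m ∈ Finset.range N,
        ‖∑ k : Fin N, c k * Complex.exp (2 * Real.pi * Complex.I * ((k:ℕ):ℂ) * (m:ℂ) / N)‖ ^ 2
      = N * ∑ k : Fin N, ‖c k‖ ^ 2 := by
  have hconj : ∀ (m : ℕ) (k : Fin N),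
      (starRingEnd ℂ) (Complex.exp (2 * Real.pi * Complex.I * ((k:ℕ):ℂ) * (m:ℂ) / N))
        = Complex.exp (-(2 * Real.pi * Complex.I * ((k:ℕ):ℂ) * (m:ℂ) / N)) := by
    intro m k
    rw [← Complex.exp_conj]
    congr 1
    simp only [map_div₀, map_mul, map_ofNat, Complex.conj_I, Complex.conj_ofReal,
      Complex.conj_natCast, neg_div]
    ring
  have key : ∀ m : ℕ,
      ((∑ k : Fin N, c k * Complex.exp (2 * Real.pi * Complex.I * ((k:ℕ):ℂ) * (m:ℂ) / N)) *
        (starRingEnd ℂ) (∑ k : Fin N, c k * Complex.exp (2 * Real.pi * Complex.I * ((k:ℕ):ℂ) * (m:ℂ) / N)))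
      = ∑ k : Fin N, ∑ k' : Fin N, (c k * (starRingEnd ℂ) (c k')) *
          Complex.exp (2 * Real.pi * Complex.I * (((k:ℕ):ℂ) - ((k':ℕ):ℂ)) * (m:ℂ) / N) := by
    intro m
    rw [map_sum, Finset.sum_mul_sum]
    refine Finset.sum_congr rfl fun k _ => Finset.sum_congr rfl fun k' _ => ?_
    rw [map_mul, hconj]
    rw [mul_mul_mul_comm, ← Complex.exp_add]
    congr 1
    field_simp
    ring
  have hC : ∑ m ∈ Finset.range N,
      ((∑ k : Fin N, c k * Complex.exp (2 * Real.pi * Complex.I * ((k:ℕ):ℂ) * (m:ℂ) / N)) *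
        (starRingEnd ℂ) (∑ k : Fin N, c k * Complex.exp (2 * Real.pi * Complex.I * ((k:ℕ):ℂ) * (m:ℂ) / N)))
      = (N:ℂ) * ∑ k : Fin N, c k * (starRingEnd ℂ) (c k) := by
    simp_rw [key]
    rw [Finset.sum_comm]
    have step : ∀ k : Fin N, ∑ m ∈ Finset.range N, ∑ k' : Fin N,
        (c k * (starRingEnd ℂ) (c k')) *
          Complex.exp (2 * Real.pi * Complex.I * (((k:ℕ):ℂ) - ((k':ℕ):ℂ)) * (m:ℂ) / N)
      = ∑ k' : Fin N, (c k * (starRingEnd ℂ) (c k')) * (if k = k' then (N:ℂ) else 0) := by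
      intro k
      rw [Finset.sum_comm]
      refine Finset.sum_congr rfl fun k' _ => ?_
      rw [← Finset.mul_sum, exp_orth N hN k k']
    simp_rw [step]
    simp only [mul_ite, mul_zero, Finset.sum_ite_eq, Finset.mem_univ, if_true]
    rw [Finset.mul_sum]
    exact Finset.sum_congr rfl fun k _ => by ring
  have habs : ∀ z : ℂ, ‖z‖ ^ 2 = (z * (starRingEnd ℂ) z).re := by
    intro z
    rw [Complex.mul_conj, Complex.sq_norm, Complex.ofReal_re]
  calc ∑ m ∈ Finset.range N,
        ‖∑ k : Fin N, c k * Complex.exp (2 * Real.pi * Complex.I * ((k:ℕ):ℂ) * (m:ℂ) / N)‖ ^ 2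
      = (∑ m ∈ Finset.range N,
          ((∑ k : Fin N, c k * Complex.exp (2 * Real.pi * Complex.I * ((k:ℕ):ℂ) * (m:ℂ) / N)) *
            (starRingEnd ℂ) (∑ k : Fin N, c k * Complex.exp (2 * Real.pi * Complex.I * ((k:ℕ):ℂ) * (m:ℂ) / N)))).re := by
        rw [Complex.re_sum]
        exact Finset.sum_congr rfl fun m _ => habs _
    _ = ((N:ℂ) * ∑ k : Fin N, c k * (starRingEnd ℂ) (c k)).re := by rw [hC]
    _ = N * ∑ k : Fin N, ‖c k‖ ^ 2 := by
        have h4 : ∑ k : Fin N, c k * (starRingEnd ℂ) (c k)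
            = ((∑ k : Fin N, ‖c k‖ ^ 2 : ℝ) : ℂ) := by
          rw [Complex.ofReal_sum]
          exact Finset.sum_congr rfl fun k _ => by
            rw [Complex.mul_conj]
            exact_mod_cast congrArg Complex.ofReal (Complex.sq_norm (c k)).symm
        rw [h4, ← Complex.ofReal_natCast, ← Complex.ofReal_mul, Complex.ofReal_re]


noncomputable def gTerm (N : ℕ) (h : Fin N → ℝ) (c : Fin N → ℂ) (t0 : ℤ) (n : ℤ) : ℂ :=
  if hc : 0 ≤ n - t0 ∧ n - t0 < N then
    (h ⟨(n - t0).toNat, by omega⟩ : ℂ) *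
      ∑ k : Fin N, c k *
        Complex.exp (2 * Real.pi * Complex.I * (k : ℕ) * ((n - t0) : ℤ) / N)
  else 0

lemma olaISTFT_eq (N T H : ℕ) (h : Fin N → ℝ) (S : Fin T → Fin N → ℂ) (n : ℤ) :
    olaISTFT N T H h S n = ∑ t : Fin T, gTerm N h (S t) ((t : ℤ) * H) n := rfl

lemma gTerm_eq_zero (N : ℕ) (h : Fin N → ℝ) (c : Fin N → ℂ) (t0 n : ℤ)
    (hcond : n < t0 ∨ t0 + N ≤ n) : gTerm N h c t0 n = 0 := by
  unfold gTerm
  rw [dif_neg]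
  omega

lemma gTerm_shift (N : ℕ) (h : Fin N → ℝ) (c : Fin N → ℂ) (t0 : ℤ) (m : ℕ) (hm : m < N) :
    gTerm N h c t0 (t0 + m) = (h ⟨m, hm⟩ : ℂ) *
      ∑ k : Fin N, c k * Complex.exp (2 * Real.pi * Complex.I * ((k:ℕ):ℂ) * (m:ℂ) / N) := by
  unfold gTerm
  rw [dif_pos (by constructor <;> omega)]
  have h1 : t0 + (m:ℤ) - t0 = (m:ℤ) := by ring
  simp only [h1, Int.toNat_natCast, Int.cast_natCast]

/-- **Lemma (ISTFT Lipschitz Continuity).**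
For any two spectrograms `S₁, S₂ : Fin T → Fin N → ℂ`,
`‖ISTFT S₁ − ISTFT S₂‖₂ ≤ ‖h‖_∞ · √(N·T) · ‖S₁ − S₂‖₂`,
where `‖h‖_∞ = max_{m<N} |h m|` and the spectrogram norm is the entrywise ℓ² norm.
In particular the ISTFT operator is Lipschitz with constant at most `‖h‖_∞ · √(N·T)`. -/
theorem istft_lipschitz (N T H : ℕ) (hN : 1 ≤ N) (hT : 1 ≤ T) (hH : 1 ≤ H)
    (h : Fin N → ℝ) (S₁ S₂ : Fin T → Fin N → ℂ) :
    Real.sqrt (∑' n : ℤ, ‖olaISTFT N T H h S₁ n - olaISTFT N T H h S₂ n‖ ^ 2) ≤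
      (Finset.univ.sup' (Finset.univ_nonempty_iff.mpr ⟨⟨0, hN⟩⟩) fun m : Fin N => |h m|) *
        Real.sqrt (N * T) *
        Real.sqrt (∑ t : Fin T, ∑ k : Fin N, ‖S₁ t k - S₂ t k‖ ^ 2) := by
  classical
  set M : ℝ := Finset.univ.sup' (Finset.univ_nonempty_iff.mpr ⟨⟨0, hN⟩⟩)
      (fun m : Fin N => |h m|) with hMdef
  have hMb : ∀ m : Fin N, |h m| ≤ M := by
    intro m
    rw [hMdef]
    exact Finset.le_sup' (fun m : Fin N => |h m|) (Finset.mem_univ m)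
  have hM0 : 0 ≤ M := le_trans (abs_nonneg (h ⟨0, hN⟩)) (hMb ⟨0, hN⟩)
  set D : Fin T → Fin N → ℂ := fun t k => S₁ t k - S₂ t k with hD
  set E : ℝ := ∑ t : Fin T, ∑ k : Fin N, ‖S₁ t k - S₂ t k‖ ^ 2 with hE
  have hlin : ∀ n : ℤ, olaISTFT N T H h S₁ n - olaISTFT N T H h S₂ n
      = ∑ t : Fin T, gTerm N h (D t) ((t : ℤ) * H) n := by
    intro n
    rw [olaISTFT_eq, olaISTFT_eq, ← Finset.sum_sub_distrib]
    refine Finset.sum_congr rfl fun t _ => ?_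
    unfold gTerm
    by_cases hc : 0 ≤ n - (t : ℤ) * H ∧ n - (t : ℤ) * H < N
    · rw [dif_pos hc, dif_pos hc, dif_pos hc, ← mul_sub, ← Finset.sum_sub_distrib]
      congr 1
      refine Finset.sum_congr rfl fun k _ => ?_
      simp only [hD]
      ring
    · rw [dif_neg hc, dif_neg hc, dif_neg hc, sub_self]
  set s : Finset ℤ := Finset.Icc 0 ((T : ℤ) * H + N) with hs
  have hzero : ∀ n ∉ s, ‖olaISTFT N T H h S₁ n - olaISTFT N T H h S₂ n‖ ^ 2 = 0 := by
    intro n hn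
    rw [hlin n, Finset.sum_eq_zero, norm_zero]
    · norm_num
    intro t _
    apply gTerm_eq_zero
    have ht : (t : ℤ) < T := by exact_mod_cast t.isLt
    have h1 : 0 ≤ (t : ℤ) * H := by positivity
    have h2 : (t : ℤ) * H ≤ (T : ℤ) * H :=
      mul_le_mul_of_nonneg_right (by omega) (by positivity)
    simp only [hs, Finset.mem_Icc, not_and, not_le] at hn
    omega
  have hkey : ∑' n : ℤ, ‖olaISTFT N T H h S₁ n - olaISTFT N T H h S₂ n‖ ^ 2
      ≤ M ^ 2 * ((N : ℝ) * (T : ℝ)) * E := by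
    rw [tsum_eq_sum hzero]
    have step1 : ∑ n ∈ s, ‖olaISTFT N T H h S₁ n - olaISTFT N T H h S₂ n‖ ^ 2
        ≤ (T : ℝ) * ∑ n ∈ s, ∑ t : Fin T, ‖gTerm N h (D t) ((t : ℤ) * H) n‖ ^ 2 := by
      rw [Finset.mul_sum]
      refine Finset.sum_le_sum fun n _ => ?_
      rw [hlin n]
      calc ‖∑ t : Fin T, gTerm N h (D t) ((t : ℤ) * H) n‖ ^ 2
          ≤ (∑ t : Fin T, ‖gTerm N h (D t) ((t : ℤ) * H) n‖) ^ 2 := by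
            apply pow_le_pow_left₀ (norm_nonneg _)
            exact norm_sum_le _ _
        _ ≤ (Finset.univ.card : ℝ) * ∑ t : Fin T, ‖gTerm N h (D t) ((t : ℤ) * H) n‖ ^ 2 :=
            sq_sum_le_card_mul_sum_sq
        _ = (T : ℝ) * ∑ t : Fin T, ‖gTerm N h (D t) ((t : ℤ) * H) n‖ ^ 2 := by
            simp
    have step3 : ∀ t : Fin T, ∑ n ∈ s, ‖gTerm N h (D t) ((t : ℤ) * H) n‖ ^ 2
        ≤ M ^ 2 * ((N : ℝ) * ∑ k : Fin N, ‖D t k‖ ^ 2) := by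
      intro t
      have ht : (t : ℤ) < T := by exact_mod_cast t.isLt
      have hsub : (Finset.range N).image (fun m : ℕ => (t : ℤ) * H + m) ⊆ s := by
        intro n hn
        simp only [Finset.mem_image, Finset.mem_range] at hn
        obtain ⟨m, hm, rfl⟩ := hn
        have h1 : 0 ≤ (t : ℤ) * H := by positivity
        have h2 : (t : ℤ) * H ≤ (T : ℤ) * H :=
          mul_le_mul_of_nonneg_right (by omega) (by positivity)
        simp only [hs, Finset.mem_Icc]
        omega
      have hvanish : ∀ n ∈ s, n ∉ (Finset.range N).image (fun m : ℕ => (t : ℤ) * H + m) →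
          ‖gTerm N h (D t) ((t : ℤ) * H) n‖ ^ 2 = 0 := by
        intro n _ hn
        rw [gTerm_eq_zero]
        · norm_num
        by_contra hcon
        push_neg at hcon
        apply hn
        simp only [Finset.mem_image, Finset.mem_range]
        exact ⟨(n - (t : ℤ) * H).toNat, by omega, by omega⟩
      rw [← Finset.sum_subset hsub hvanish]
      rw [Finset.sum_image (fun m₁ _ m₂ _ e => by omega)]
      have hterm : ∀ m ∈ Finset.range N,
          ‖gTerm N h (D t) ((t : ℤ) * H) ((t : ℤ) * H + m)‖ ^ 2
          ≤ M ^ 2 * ‖∑ k : Fin N, D t k *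
              Complex.exp (2 * Real.pi * Complex.I * ((k:ℕ):ℂ) * (m:ℂ) / N)‖ ^ 2 := by
        intro m hm
        rw [gTerm_shift N h (D t) ((t : ℤ) * H) m (Finset.mem_range.mp hm)]
        rw [norm_mul, mul_pow, Complex.norm_real, Real.norm_eq_abs]
        have hh : |h ⟨m, Finset.mem_range.mp hm⟩| ^ 2 ≤ M ^ 2 := by
          have h1 := hMb ⟨m, Finset.mem_range.mp hm⟩
          nlinarith [abs_nonneg (h ⟨m, Finset.mem_range.mp hm⟩)]
        exact mul_le_mul_of_nonneg_right hh (by positivity)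
      calc ∑ m ∈ Finset.range N, ‖gTerm N h (D t) ((t : ℤ) * H) ((t : ℤ) * H + m)‖ ^ 2
          ≤ ∑ m ∈ Finset.range N, M ^ 2 * ‖∑ k : Fin N, D t k *
              Complex.exp (2 * Real.pi * Complex.I * ((k:ℕ):ℂ) * (m:ℂ) / N)‖ ^ 2 :=
            Finset.sum_le_sum hterm
        _ = M ^ 2 * ∑ m ∈ Finset.range N, ‖∑ k : Fin N, D t k *
              Complex.exp (2 * Real.pi * Complex.I * ((k:ℕ):ℂ) * (m:ℂ) / N)‖ ^ 2 := by
            rw [Finset.mul_sum]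
        _ = M ^ 2 * ((N : ℝ) * ∑ k : Fin N, ‖D t k‖ ^ 2) := by
            rw [parseval N hN (D t)]
    calc ∑ n ∈ s, ‖olaISTFT N T H h S₁ n - olaISTFT N T H h S₂ n‖ ^ 2
        ≤ (T : ℝ) * ∑ n ∈ s, ∑ t : Fin T, ‖gTerm N h (D t) ((t : ℤ) * H) n‖ ^ 2 :=
          step1
      _ = (T : ℝ) * ∑ t : Fin T, ∑ n ∈ s, ‖gTerm N h (D t) ((t : ℤ) * H) n‖ ^ 2 := by
          rw [Finset.sum_comm]
      _ ≤ (T : ℝ) * ∑ t : Fin T, M ^ 2 * ((N : ℝ) * ∑ k : Fin N, ‖D t k‖ ^ 2) := by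
          apply mul_le_mul_of_nonneg_left (Finset.sum_le_sum fun t _ => step3 t) (by positivity)
      _ = M ^ 2 * ((N : ℝ) * (T : ℝ)) * E := by
          rw [hE, hD]
          simp only [← Finset.mul_sum]
          ring
  calc Real.sqrt (∑' n : ℤ, ‖olaISTFT N T H h S₁ n - olaISTFT N T H h S₂ n‖ ^ 2)
      ≤ Real.sqrt (M ^ 2 * ((N : ℝ) * (T : ℝ)) * E) := Real.sqrt_le_sqrt hkey
    _ = M * Real.sqrt ((N : ℝ) * (T : ℝ)) * Real.sqrt E := by
        rw [Real.sqrt_mul (by positivity), Real.sqrt_mul (by positivity), Real.sqrt_sq hM0]
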